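/- Let X be a Poisson random variable with parameter λ and let Y = X(X-1)/2. For every m ≥ 1, the falling factorial moment E[(Y)_m] = E[Y(Y-1)⋯(Y-m+1)] is a polynomial in λ of degree 2m. -/

import Mathlib

open Polynomial Nat

private lemma poisson_summable (lam : ℝ) (j : ℕ) :
    Summable (fun k : ℕ => Real.exp (-lam) * lam ^ k / k ! * (k.descFactorial j : ℝ)) := by
  set f : ℕ → ℝ := fun k => Real.exp (-lam) * lam ^ k / k ! * (k.descFactorial j : ℝ) with hf
  have hinj : Function.Injective (fun n : ℕ => n + j) := add_left_injective j
  have hzero : ∀ k ∉ Set.range (fun n : ℕ => n + j), f k = 0 := by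
    intro k hk
    have : k < j := by
      by_contra h
      exact hk ⟨k - j, by simp; omega⟩
    simp [f, Nat.descFactorial_eq_zero_iff_lt.2 this]
  have hcomp : (f ∘ fun n : ℕ => n + j) = fun n : ℕ =>
      (Real.exp (-lam) * lam ^ j) * (lam ^ n / n !) := by
    ext n
    have h1 : (n ! : ℝ) * ((n + j).descFactorial j : ℝ) = ((n + j)! : ℝ) := by
      rw [← Nat.cast_mul, ← Nat.factorial_mul_descFactorial (Nat.le_add_left j n)]
      simp
    have h2 : ((n+j)! : ℝ) ≠ 0 := by positivity
    have h3 : (n ! : ℝ) ≠ 0 := by positivity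
    have h4 : (((n + j).descFactorial j : ℕ) : ℝ) ≠ 0 := by
      intro h0; rw [h0, mul_zero] at h1; exact h2 h1.symm
    simp only [Function.comp_apply, f]
    rw [← h1, pow_add]
    field_simp
  rw [← hinj.summable_iff hzero, hcomp]
  exact (Real.summable_pow_div_factorial lam).mul_left _

private lemma poisson_moment (lam : ℝ) (j : ℕ) :
    ∑' k : ℕ, Real.exp (-lam) * lam ^ k / k ! * (k.descFactorial j : ℝ) = lam ^ j := by
  set f : ℕ → ℝ := fun k => Real.exp (-lam) * lam ^ k / k ! * (k.descFactorial j : ℝ) with hf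
  have hinj : Function.Injective (fun n : ℕ => n + j) := add_left_injective j
  have hsupp : Function.support f ⊆ Set.range (fun n : ℕ => n + j) := by
    intro k hk
    by_contra h
    have : k < j := by
      by_contra h'
      exact h ⟨k - j, by simp; omega⟩
    exact hk (by simp [f, Nat.descFactorial_eq_zero_iff_lt.2 this])
  have hcomp : ∀ n : ℕ, f (n + j) = (Real.exp (-lam) * lam ^ j) * (lam ^ n / n !) := by
    intro n
    have h1 : (n ! : ℝ) * ((n + j).descFactorial j : ℝ) = ((n + j)! : ℝ) := by
      rw [← Nat.cast_mul, ← Nat.factorial_mul_descFactorial (Nat.le_add_left j n)]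
      simp
    have h2 : ((n+j)! : ℝ) ≠ 0 := by positivity
    have h3 : (n ! : ℝ) ≠ 0 := by positivity
    have h4 : (((n + j).descFactorial j : ℕ) : ℝ) ≠ 0 := by
      intro h0; rw [h0, mul_zero] at h1; exact h2 h1.symm
    simp only [Function.comp_apply, f]
    rw [← h1, pow_add]
    field_simp
  calc ∑' k, f k = ∑' n : ℕ, f (n + j) := (hinj.tsum_eq hsupp).symm
    _ = ∑' n : ℕ, (Real.exp (-lam) * lam ^ j) * (lam ^ n / n !) := tsum_congr hcomp
    _ = (Real.exp (-lam) * lam ^ j) * ∑' n : ℕ, lam ^ n / n ! :=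
        tsum_mul_left
    _ = lam ^ j := by
        rw [show (∑' n : ℕ, lam ^ n / n !) = Real.exp lam by
          rw [Real.exp_eq_exp_ℝ, NormedSpace.exp_eq_tsum_div],
          mul_comm (Real.exp (-lam)) (lam ^ j), mul_assoc, ← Real.exp_add,
          neg_add_cancel, Real.exp_zero, mul_one]

private lemma desc_expansion (N : ℕ) : ∀ q : Polynomial ℝ, q.natDegree ≤ N →
    ∃ c : ℕ → ℝ, q = ∑ j ∈ Finset.range (N + 1), Polynomial.C (c j) * descPochhammer ℝ j := by
  induction N with
  | zero =>
    intro q hq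
    refine ⟨fun _ => q.coeff 0, ?_⟩
    simp [descPochhammer_zero]
    exact eq_C_of_natDegree_le_zero hq
  | succ N ih =>
    intro q hq
    set a := q.coeff (N + 1) with ha
    set r := q - C a * descPochhammer ℝ (N + 1) with hr
    have hdP : (descPochhammer ℝ (N + 1)).natDegree = N + 1 := descPochhammer_natDegree ℝ (N + 1)
    have hrd : r.natDegree ≤ N := by
      rw [natDegree_le_iff_coeff_eq_zero]
      intro i hi
      rcases eq_or_lt_of_le (Nat.succ_le_of_lt hi) with h | h
      · subst h
        have hone : (descPochhammer ℝ (N + 1)).coeff (N + 1) = 1 := by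
          have := (monic_descPochhammer ℝ (N + 1)).coeff_natDegree
          rwa [hdP] at this
        simp [hr, coeff_sub, coeff_C_mul, hone, ha]
      · have h1 : q.coeff i = 0 := coeff_eq_zero_of_natDegree_lt (lt_of_le_of_lt hq h)
        have h2 : (descPochhammer ℝ (N + 1)).coeff i = 0 :=
          coeff_eq_zero_of_natDegree_lt (by omega)
        simp [hr, coeff_C_mul, h1, h2]
    obtain ⟨c', hc'⟩ := ih r hrd
    refine ⟨fun j => if j = N + 1 then a else c' j, ?_⟩
    rw [Finset.sum_range_succ]
    have : ∑ j ∈ Finset.range (N + 1), C (if j = N + 1 then a else c' j) * descPochhammer ℝ j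
        = ∑ j ∈ Finset.range (N + 1), C (c' j) * descPochhammer ℝ j := by
      apply Finset.sum_congr rfl
      intro j hj
      rw [Finset.mem_range] at hj
      simp [Nat.ne_of_lt hj]
    rw [this, ← hc']
    simp [hr]

/-- Let `X ~ Po(λ)` and `Y = binom(X,2)`. For every `m ≥ 1`, the falling factorial moment
`E[(Y)_m]` is a polynomial in `λ` of degree `2m`. -/
theorem poisson_choose_two_factorial_moment_polynomial (m : ℕ) (hm : 1 ≤ m) :
    ∃ p : Polynomial ℝ, p.degree = (2 * m : ℕ) ∧
      ∀ lam : ℝ, 0 ≤ lam →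
        ∑' k : ℕ, (Real.exp (-lam) * lam ^ k / (Nat.factorial k)) *
            ((Nat.descFactorial (Nat.choose k 2) m : ℝ))
          = p.eval lam := by
  classical
  set Q : Polynomial ℝ := C (2⁻¹ : ℝ) * (X ^ 2 - X) with hQ
  have hQdeg : Q.natDegree = 2 := by
    rw [hQ]
    compute_degree!
  set q : Polynomial ℝ := (descPochhammer ℝ m).comp Q with hq
  have hqdeg : q.natDegree = 2 * m := by
    rw [hq, natDegree_comp, descPochhammer_natDegree, hQdeg, Nat.mul_comm]
  -- leading coefficient of q
  have hQlc : Q.leadingCoeff = 2⁻¹ := by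
    rw [Polynomial.leadingCoeff, hQdeg]
    simp [hQ, coeff_C_mul, coeff_X_pow, coeff_X]
  have hqlc : q.leadingCoeff = (2⁻¹ : ℝ) ^ m := by
    rw [hq, leadingCoeff_comp (by rw [hQdeg]; norm_num), hQlc,
      (monic_descPochhammer ℝ m).leadingCoeff, descPochhammer_natDegree, one_mul]
  have hqcoeff : q.coeff (2 * m) ≠ 0 := by
    rw [← hqdeg]
    rw [← Polynomial.leadingCoeff, hqlc]
    positivity
  -- evaluation of q at naturals
  have hqeval : ∀ k : ℕ, q.eval (k : ℝ) = ((k.choose 2).descFactorial m : ℝ) := by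
    intro k
    have hQk : Q.eval (k : ℝ) = ((k.choose 2 : ℕ) : ℝ) := by
      rw [Nat.cast_choose_two]
      simp [hQ]
      ring
    rw [hq, eval_comp, hQk, descPochhammer_eval_eq_descFactorial]
  -- expansion
  obtain ⟨c, hc⟩ := desc_expansion (2 * m) q (le_of_eq hqdeg)
  -- target polynomial
  set p : Polynomial ℝ := ∑ j ∈ Finset.range (2 * m + 1), C (c j) * X ^ j with hp
  have hpcoeff : ∀ i : ℕ, i ≤ 2 * m → p.coeff i = c i := by
    intro i hi
    rw [hp, finset_sum_coeff]
    rw [Finset.sum_eq_single i]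
    · simp
    · intro j hj hne
      simp [coeff_C_mul, coeff_X_pow, Ne.symm hne]
    · intro h
      exact absurd (Finset.mem_range.mpr (by omega)) h
  have hc2m : c (2 * m) = q.coeff (2 * m) := by
    rw [hc, finset_sum_coeff, Finset.sum_eq_single (2 * m)]
    · have hone : (descPochhammer ℝ (2 * m)).coeff (2 * m) = 1 := by
        have := (monic_descPochhammer ℝ (2 * m)).coeff_natDegree
        rwa [descPochhammer_natDegree] at this
      simp [coeff_C_mul, hone]
    · intro j hj hne
      rw [Finset.mem_range] at hj
      have : j < 2 * m := by omega
      rw [coeff_C_mul, coeff_eq_zero_of_natDegree_lt (by rw [descPochhammer_natDegree]; omega),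
        mul_zero]
    · intro h
      exact absurd (Finset.mem_range.mpr (by omega)) h
  refine ⟨p, ?_, ?_⟩
  · -- degree
    have h1 : p.degree ≤ (2 * m : ℕ) := by
      rw [hp]
      refine (degree_sum_le _ _).trans ?_
      rw [Finset.sup_le_iff]
      intro j hj
      rw [Finset.mem_range] at hj
      refine (degree_mul_le _ _).trans ?_
      rw [degree_X_pow]
      refine le_trans (add_le_add degree_C_le le_rfl) ?_
      rw [zero_add]
      exact_mod_cast Nat.le_of_lt_succ hj
    refine degree_eq_of_le_of_coeff_ne_zero h1 ?_
    rw [hpcoeff (2 * m) le_rfl, hc2m]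
    exact hqcoeff
  · intro lam hlam
    have hterm : ∀ k : ℕ,
        Real.exp (-lam) * lam ^ k / k ! * ((k.choose 2).descFactorial m : ℝ)
          = ∑ j ∈ Finset.range (2 * m + 1),
              c j * (Real.exp (-lam) * lam ^ k / k ! * (k.descFactorial j : ℝ)) := by
      intro k
      have : ((k.choose 2).descFactorial m : ℝ)
          = ∑ j ∈ Finset.range (2 * m + 1), c j * (k.descFactorial j : ℝ) := by
        rw [← hqeval k, hc]
        simp [eval_finset_sum, descPochhammer_eval_eq_descFactorial]
      rw [this, Finset.mul_sum]
      apply Finset.sum_congr rfl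
      intro j _
      ring
    calc ∑' k : ℕ, Real.exp (-lam) * lam ^ k / k ! * ((k.choose 2).descFactorial m : ℝ)
        = ∑' k : ℕ, ∑ j ∈ Finset.range (2 * m + 1),
            c j * (Real.exp (-lam) * lam ^ k / k ! * (k.descFactorial j : ℝ)) :=
          tsum_congr hterm
      _ = ∑ j ∈ Finset.range (2 * m + 1),
            ∑' k : ℕ, c j * (Real.exp (-lam) * lam ^ k / k ! * (k.descFactorial j : ℝ)) := by
          refine Summable.tsum_finsetSum ?_
          intro j _
          exact (poisson_summable lam j).mul_left (c j)
      _ = ∑ j ∈ Finset.range (2 * m + 1), c j * lam ^ j := by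
          apply Finset.sum_congr rfl
          intro j _
          rw [tsum_mul_left, poisson_moment]
      _ = p.eval lam := by
          rw [hp]
          simp [eval_finset_sum]
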